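/- arXiv:math/9906049 — 2 statements merged into one kernel-verified Lean document; each statement's English description precedes it below -/
import Mathlib

section
/- Suppose 𝐞 = (e₁,e₂) is a nilpotent pair in 𝔤 and 𝐡 = (h₁,h₂) is a pair of semisimple elements satisfying [h₁,h₂] = 0 and [h_i,e_j] = δ_{ij} e_j for i,j ∈ {1,2}. If 𝔷_𝔤(𝐡) ∩ 𝔷_𝔤(𝐞) = 0, then 𝐡 is a characteristic of 𝐞 and 𝔷_𝔤(𝐞) contains no nonzero semisimple elements. -/
/-!
Common definitions for formalizing "Nilpotent pairs in semisimple Lie algebras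
and their characteristics" (D. Panyushev).
-/

open LieAlgebra Module Submodule

section Defs

variable (𝕜 : Type*) [Field 𝕜] [IsAlgClosed 𝕜] [CharZero 𝕜]
variable (L : Type*) [LieRing L] [LieAlgebra 𝕜 L]

/-- The centralizer `𝔷_𝔤(S)` of a set `S ⊆ 𝔤`, as a submodule. -/
def cent (S : Set L) : Submodule 𝕜 L where
  carrier := {x | ∀ s ∈ S, ⁅s, x⁆ = 0}
  add_mem' := fun {a b} ha hb s hs => by rw [lie_add, ha s hs, hb s hs, add_zero]
  zero_mem' := fun s _ => lie_zero s
  smul_mem' := fun c x hx s hs => by rw [lie_smul, hx s hs, smul_zero]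

/-- The (truncated) exponential of an endomorphism; for a nilpotent endomorphism of a
module of finite rank this is the usual exponential. -/
noncomputable def expEnd (f : Module.End 𝕜 L) : Module.End 𝕜 L :=
  ∑ i ∈ Finset.range (Module.finrank 𝕜 L + 1), (i.factorial : 𝕜)⁻¹ • f ^ i

/-- The adjoint group `G` of `𝔤`: the group of automorphisms generated by the
exponentials of nilpotent inner derivations. -/
noncomputable def adjointGroup : Subgroup (L ≃ₗ[𝕜] L) :=
  Subgroup.closure
    {φ | ∃ x : L, IsNilpotent (ad 𝕜 L x) ∧ (φ : L →ₗ[𝕜] L) = expEnd 𝕜 L (ad 𝕜 L x)}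

/-- A nilpotent pair: `[e₁,e₂] = 0` and the pair can be independently rescaled by the
adjoint group. -/
def IsNilpotentPair (e₁ e₂ : L) : Prop :=
  ⁅e₁, e₂⁆ = 0 ∧ ∀ t₁ t₂ : 𝕜, t₁ ≠ 0 → t₂ ≠ 0 →
    ∃ g ∈ adjointGroup 𝕜 L, g e₁ = t₁ • e₁ ∧ g e₂ = t₂ • e₂

/-- A characteristic of the pair `(e₁, e₂)`: a pair of semisimple elements `(h₁, h₂)`
with `[h₁,h₂] = 0`, `[hᵢ,eⱼ] = δᵢⱼ eⱼ`, and `h₁, h₂ ⊥ 𝔷_𝔤(𝐞)` w.r.t. the Killing form. -/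
def IsCharacteristic (e₁ e₂ h₁ h₂ : L) : Prop :=
  (ad 𝕜 L h₁).IsSemisimple ∧ (ad 𝕜 L h₂).IsSemisimple ∧
  ⁅h₁, h₂⁆ = 0 ∧
  ⁅h₁, e₁⁆ = e₁ ∧ ⁅h₂, e₂⁆ = e₂ ∧ ⁅h₁, e₂⁆ = 0 ∧ ⁅h₂, e₁⁆ = 0 ∧
  ∀ z ∈ cent 𝕜 L {e₁, e₂}, killingForm 𝕜 L z h₁ = 0 ∧ killingForm 𝕜 L z h₂ = 0

/-- The bi-graded component `𝔤_{p,q}` determined by the characteristic `(h₁, h₂)`. -/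
noncomputable def gpq (h₁ h₂ : L) (p q : ℚ) : Submodule 𝕜 L :=
  Module.End.eigenspace (ad 𝕜 L h₁) (p : 𝕜) ⊓ Module.End.eigenspace (ad 𝕜 L h₂) (q : 𝕜)

/-- The graded component `𝔤_p` determined by a semisimple element `h`. -/
noncomputable def gp (h : L) (p : ℚ) : Submodule 𝕜 L :=
  Module.End.eigenspace (ad 𝕜 L h) (p : 𝕜)

/-- `M(i,j) = {x ∈ M : (ad e₁)^{i+1} x = 0, (ad e₂)^{j+1} x = 0}`. -/
noncomputable def Mij (M : Submodule 𝕜 L) (e₁ e₂ : L) (i j : ℕ) : Submodule 𝕜 L :=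
  M ⊓ LinearMap.ker ((ad 𝕜 L e₁) ^ (i + 1)) ⊓ LinearMap.ker ((ad 𝕜 L e₂) ^ (j + 1))

/-- `lim_e M = Σ_{i ≥ 0} (ad e)^i M(i,*)`. -/
noncomputable def limE (e : L) (M : Submodule 𝕜 L) : Submodule 𝕜 L :=
  ⨆ i : ℕ, Submodule.map ((ad 𝕜 L e) ^ i) (M ⊓ LinearMap.ker ((ad 𝕜 L e) ^ (i + 1)))

/-- `lim_𝐞 M = Σ_{i,j ≥ 0} (ad e₁)^i (ad e₂)^j M(i,j)`. -/
noncomputable def limPair (e₁ e₂ : L) (M : Submodule 𝕜 L) : Submodule 𝕜 L :=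
  ⨆ i : ℕ, ⨆ j : ℕ,
    Submodule.map ((ad 𝕜 L e₁) ^ i * (ad 𝕜 L e₂) ^ j) (Mij 𝕜 L M e₁ e₂ i j)

/-- A nilpotent pair with characteristic `(h₁,h₂)` is wonderful if
`(ad e₁)^i (ad e₂)^j 𝔥(i,j) = 𝔷_𝔤(𝐞)_{i,j}` for all `i,j ≥ 0`, where `𝔥 = 𝔷_𝔤(𝐡)`. -/
noncomputable def IsWonderful (e₁ e₂ h₁ h₂ : L) : Prop :=
  ∀ i j : ℕ,
    Submodule.map ((ad 𝕜 L e₁) ^ i * (ad 𝕜 L e₂) ^ j)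
      (Mij 𝕜 L (cent 𝕜 L {h₁, h₂}) e₁ e₂ i j)
    = cent 𝕜 L {e₁, e₂} ⊓ gpq 𝕜 L h₁ h₂ i j

/-- The pair is integral if all eigenvalues of the characteristic are integers. -/
noncomputable def IsIntegralPair (h₁ h₂ : L) : Prop :=
  ∀ p q : ℚ, gpq 𝕜 L h₁ h₂ p q ≠ ⊥ → (∃ a : ℤ, p = a) ∧ (∃ b : ℤ, q = b)

end Defs

set_option linter.unusedSectionVars false

section Aux
attribute [local instance 100] LieRing.ofAssociativeRing
variable {𝕜 : Type*} [Field 𝕜] [IsAlgClosed 𝕜] [CharZero 𝕜]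
variable {L : Type*} [LieRing L] [LieAlgebra 𝕜 L] [Module.Finite 𝕜 L]

lemma mem_cent_iff {S : Set L} {x : L} : x ∈ cent 𝕜 L S ↔ ∀ s ∈ S, ⁅s, x⁆ = 0 := Iff.rfl

lemma mem_cent_pair {e₁ e₂ x : L} :
    x ∈ cent 𝕜 L {e₁, e₂} ↔ ⁅e₁, x⁆ = 0 ∧ ⁅e₂, x⁆ = 0 := by
  rw [mem_cent_iff]
  simp [Set.mem_insert_iff]

lemma aux_decomp {g : Module.End 𝕜 L} (hg : g.IsSemisimple) {W : Submodule 𝕜 L}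
    (hW : W ∈ g.invtSubmodule) :
    W ≤ ⨆ c : 𝕜, W ⊓ g.eigenspace c := by
  have h2 := (hg.restrict hW).isFinitelySemisimple
  have h1 : ⨆ c : 𝕜, Module.End.maxGenEigenspace (LinearMap.restrict g hW) c = ⊤ :=
    Module.End.iSup_maxGenEigenspace_eq_top _
  conv_lhs => rw [← Submodule.map_subtype_top W, ← h1]
  rw [Submodule.map_iSup]
  refine iSup_mono fun c => ?_
  rintro _ ⟨⟨w, hwW⟩, hw, rfl⟩
  rw [h2.maxGenEigenspace_eq_eigenspace] at hw
  have := Module.End.mem_eigenspace_iff.mp hw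
  apply_fun Subtype.val at this
  refine ⟨hwW, Module.End.mem_eigenspace_iff.mpr ?_⟩
  exact this

variable {e₁ e₂ h₁ h₂ : L}

/-- stability of the centralizer under suitable brackets -/
lemma cent_stab {u : L} (ha : ∀ z ∈ cent 𝕜 L {e₁, e₂}, ⁅⁅e₁, u⁆, z⁆ = 0)
    (hb : ∀ z ∈ cent 𝕜 L {e₁, e₂}, ⁅⁅e₂, u⁆, z⁆ = 0) :
    ∀ z ∈ cent 𝕜 L {e₁, e₂}, ⁅u, z⁆ ∈ cent 𝕜 L {e₁, e₂} := by
  intro z hz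
  obtain ⟨hz1, hz2⟩ := mem_cent_pair.mp hz
  rw [mem_cent_pair]
  constructor
  · rw [leibniz_lie, ha z hz, hz1, lie_zero, add_zero]
  · rw [leibniz_lie, hb z hz, hz2, lie_zero, add_zero]

section Theorems
variable (hss₁ : (ad 𝕜 L h₁).IsSemisimple) (hss₂ : (ad 𝕜 L h₂).IsSemisimple)
    (hcomm : ⁅h₁, h₂⁆ = 0)
    (h11 : ⁅h₁, e₁⁆ = e₁) (h22 : ⁅h₂, e₂⁆ = e₂)
    (h12 : ⁅h₁, e₂⁆ = 0) (h21 : ⁅h₂, e₁⁆ = 0)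
    (hmeet : cent 𝕜 L {h₁, h₂} ⊓ cent 𝕜 L {e₁, e₂} = ⊥)

include h11 h12 in
lemma stab₁ : ∀ z ∈ cent 𝕜 L {e₁, e₂}, ⁅h₁, z⁆ ∈ cent 𝕜 L {e₁, e₂} := by
  refine cent_stab (fun z hz => ?_) (fun z hz => ?_)
  · have he : ⁅e₁, h₁⁆ = -e₁ := by
      have h := lie_skew h₁ e₁; rw [h11] at h; exact neg_eq_iff_eq_neg.mp h
    rw [he, neg_lie, (mem_cent_pair.mp hz).1, neg_zero]
  · have he : ⁅e₂, h₁⁆ = 0 := by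
      have h := lie_skew h₁ e₂; rw [h12] at h; exact neg_eq_zero.mp h
    rw [he, zero_lie]

include h22 h21 in
lemma stab₂ : ∀ z ∈ cent 𝕜 L {e₁, e₂}, ⁅h₂, z⁆ ∈ cent 𝕜 L {e₁, e₂} := by
  refine cent_stab (fun z hz => ?_) (fun z hz => ?_)
  · have he : ⁅e₁, h₂⁆ = 0 := by
      have h := lie_skew h₂ e₁; rw [h21] at h; exact neg_eq_zero.mp h
    rw [he, zero_lie]
  · have he : ⁅e₂, h₂⁆ = -e₂ := by
      have h := lie_skew h₂ e₂; rw [h22] at h; exact neg_eq_iff_eq_neg.mp h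
    rw [he, neg_lie, (mem_cent_pair.mp hz).2, neg_zero]

lemma stabZ {x : L} (hx : x ∈ cent 𝕜 L {e₁, e₂}) :
    ∀ z ∈ cent 𝕜 L {e₁, e₂}, ⁅x, z⁆ ∈ cent 𝕜 L {e₁, e₂} := by
  obtain ⟨hx1, hx2⟩ := mem_cent_pair.mp hx
  refine cent_stab (fun z hz => ?_) (fun z hz => ?_)
  · rw [hx1, zero_lie]
  · rw [hx2, zero_lie]

include hss₁ hss₂ hcomm h11 h12 h21 h22 in
lemma main_decomp :
    cent 𝕜 L {e₁, e₂} ≤ ⨆ μ : 𝕜, ⨆ ν : 𝕜,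
      (cent 𝕜 L {e₁, e₂} ⊓ (ad 𝕜 L h₁).eigenspace μ ⊓ (ad 𝕜 L h₂).eigenspace ν) := by
  set Z := cent 𝕜 L {e₁, e₂}
  have inv1 : Z ∈ (ad 𝕜 L h₁).invtSubmodule := by
    rw [Module.End.mem_invtSubmodule]
    intro z hz
    simp only [SetLike.mem_coe, Submodule.mem_comap] at hz ⊢
    simpa using stab₁ (𝕜 := 𝕜) h11 h12 z hz
  calc Z ≤ ⨆ μ : 𝕜, Z ⊓ (ad 𝕜 L h₁).eigenspace μ := aux_decomp hss₁ inv1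
    _ ≤ _ := by
        refine iSup_mono fun μ => ?_
        have inv2 : (Z ⊓ (ad 𝕜 L h₁).eigenspace μ) ∈ (ad 𝕜 L h₂).invtSubmodule := by
          rw [Module.End.mem_invtSubmodule]
          intro z hz
          simp only [SetLike.mem_coe, Submodule.mem_comap, Submodule.mem_inf] at hz ⊢
          obtain ⟨hzZ, hze⟩ := hz
          refine ⟨stab₂ (𝕜 := 𝕜) h22 h21 z hzZ, ?_⟩
          rw [Module.End.mem_eigenspace_iff] at hze ⊢
          simp only [ad_apply] at hze ⊢
          rw [leibniz_lie, hcomm, zero_lie, zero_add, hze, lie_smul]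
        exact aux_decomp hss₂ inv2

lemma orth_of_eig {h' : L} (hh1 : ⁅h', h₁⁆ = 0) (hh2 : ⁅h', h₂⁆ = 0) {c : 𝕜} (hc : c ≠ 0)
    {z : L} (hz : z ∈ (ad 𝕜 L h').eigenspace c) :
    killingForm 𝕜 L z h₁ = 0 ∧ killingForm 𝕜 L z h₂ = 0 := by
  have hzz : ⁅h', z⁆ = c • z := by
    simpa [ad_apply] using Module.End.mem_eigenspace_iff.mp hz
  have key : ∀ w : L, ⁅h', w⁆ = 0 → killingForm 𝕜 L z w = 0 := by
    intro w hw
    have h := LieModule.traceForm_apply_lie_apply' 𝕜 L L h' z w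
    rw [hzz, hw, map_zero, neg_zero, map_smul] at h
    exact (smul_eq_zero.mp h).resolve_left hc
  exact ⟨key h₁ hh1, key h₂ hh2⟩

include hss₁ hss₂ hcomm h11 h12 h21 h22 hmeet in
lemma part1 : ∀ z ∈ cent 𝕜 L {e₁, e₂},
    killingForm 𝕜 L z h₁ = 0 ∧ killingForm 𝕜 L z h₂ = 0 := by
  have h21' : ⁅h₂, h₁⁆ = 0 := by
    have h := lie_skew h₁ h₂; rw [hcomm] at h; exact neg_eq_zero.mp h
  have hle : cent 𝕜 L {e₁, e₂} ≤
      LinearMap.ker ((killingForm 𝕜 L).flip h₁) ⊓ LinearMap.ker ((killingForm 𝕜 L).flip h₂) := by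
    refine (main_decomp hss₁ hss₂ hcomm h11 h22 h12 h21).trans ?_
    refine iSup_le fun μ => iSup_le fun ν => ?_
    intro w hw
    rw [Submodule.mem_inf] at hw
    obtain ⟨hw', hw2⟩ := hw
    rw [Submodule.mem_inf] at hw'
    obtain ⟨hwZ, hw1⟩ := hw'
    simp only [Submodule.mem_inf, LinearMap.mem_ker, LinearMap.flip_apply]
    rcases eq_or_ne μ 0 with rfl | hμ
    · rcases eq_or_ne ν 0 with rfl | hν
      · have hwH : w ∈ cent 𝕜 L {h₁, h₂} := by
          rw [mem_cent_pair]
          constructor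
          · simpa [ad_apply] using Module.End.mem_eigenspace_iff.mp hw1
          · simpa [ad_apply] using Module.End.mem_eigenspace_iff.mp hw2
        have hbot : w ∈ cent 𝕜 L {h₁, h₂} ⊓ cent 𝕜 L {e₁, e₂} := ⟨hwH, hwZ⟩
        rw [hmeet, Submodule.mem_bot] at hbot
        simp [hbot]
      · exact orth_of_eig h21' (lie_self h₂) hν hw2
    · exact orth_of_eig (lie_self h₁) hcomm hμ hw1
  intro z hz
  have := hle hz
  rw [Submodule.mem_inf] at this
  exact this

include hss₁ hss₂ hcomm h11 h12 h21 h22 hmeet in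
lemma part2 [LieAlgebra.IsSemisimple 𝕜 L] :
    ∀ x ∈ cent 𝕜 L {e₁, e₂}, (ad 𝕜 L x).IsSemisimple → x = 0 := by
  intro x hxZ hxss
  set Z := cent 𝕜 L {e₁, e₂} with hZdef
  set X := ad 𝕜 L x with hXdef
  have horth := part1 hss₁ hss₂ hcomm h11 h22 h12 h21 hmeet
  classical
  -- eigenspace decomposition of L under X
  have htop : ⨆ c : 𝕜, X.eigenspace c = ⊤ := by
    have h := Module.End.iSup_maxGenEigenspace_eq_top X
    simp only [hxss.isFinitelySemisimple.maxGenEigenspace_eq_eigenspace] at h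
    exact h
  have hind : iSupIndep X.eigenspace := Module.End.eigenspaces_iSupIndep X
  have hint : DirectSum.IsInternal X.eigenspace :=
    DirectSum.isInternal_submodule_of_iSupIndep_of_iSup_eq_top hind htop
  let bC : (c : 𝕜) → Basis (Basis.ofVectorSpaceIndex 𝕜 (X.eigenspace c)) 𝕜 (X.eigenspace c) :=
    fun c => Basis.ofVectorSpace 𝕜 _
  let b := hint.collectedBasis bC
  have hbmem : ∀ i, b i ∈ X.eigenspace i.1 := fun i => hint.collectedBasis_mem bC i
  haveI : Fintype ((c : 𝕜) × Basis.ofVectorSpaceIndex 𝕜 (X.eigenspace c)) :=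
    FiniteDimensional.fintypeBasisIndex b
  -- invariance of Z under X
  have hinvZ : Z ∈ X.invtSubmodule := by
    rw [Module.End.mem_invtSubmodule]
    intro z hz
    simp only [SetLike.mem_coe, Submodule.mem_comap] at hz ⊢
    simpa [hXdef, ad_apply] using stabZ (𝕜 := 𝕜) hxZ z hz
  have hall : ∀ f : 𝕜 →ₗ[ℚ] ℚ, ∀ i : (c : 𝕜) × Basis.ofVectorSpaceIndex 𝕜 (X.eigenspace c),
      f i.1 = 0 := by
    intro f
    have hminne : minpoly 𝕜 X ≠ 0 := minpoly.ne_zero (Algebra.IsIntegral.isIntegral (R := 𝕜) X)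
    set N : Finset 𝕜 := (minpoly 𝕜 X).roots.toFinset with hNdef
    have hNmem : ∀ {c : 𝕜}, X.HasEigenvalue c → c ∈ N := by
      intro c hc
      rw [hNdef, Multiset.mem_toFinset, Polynomial.mem_roots hminne]
      exact Module.End.hasEigenvalue_iff_isRoot.mp hc
    set sh : Module.End 𝕜 L :=
      Polynomial.aeval X (Lagrange.interpolate N id (fun c => (f c : 𝕜))) with hshdef
    have hsh_eig : ∀ (c : 𝕜) (v : L), v ∈ X.eigenspace c → sh v = (f c : 𝕜) • v := by
      intro c v hv
      rcases eq_or_ne v 0 with rfl | hv0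
      · simp
      · have hev : X.HasEigenvalue c := Module.End.hasEigenvalue_of_hasEigenvector ⟨hv, hv0⟩
        rw [hshdef, Module.End.aeval_apply_of_hasEigenvector ⟨hv, hv0⟩]
        congr 1
        exact Lagrange.eval_interpolate_at_node _ (Set.injOn_id _) (hNmem hev)
    -- key commutation property
    have hkey : ∀ (d : 𝕜), ∀ z ∈ Z ⊓ X.eigenspace d,
        sh * ad 𝕜 L z - ad 𝕜 L z * sh = (f d : 𝕜) • ad 𝕜 L z := by
      intro d z hz
      rw [Submodule.mem_inf] at hz
      obtain ⟨hzZ, hzd⟩ := hz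
      have hzd' : ⁅x, z⁆ = d • z := by
        simpa [hXdef, ad_apply] using Module.End.mem_eigenspace_iff.mp hzd
      have hker : ⨆ c : 𝕜, X.eigenspace c ≤
          LinearMap.ker (sh * ad 𝕜 L z - ad 𝕜 L z * sh - (f d : 𝕜) • ad 𝕜 L z) := by
        refine iSup_le fun c => ?_
        intro v hv
        have hvc : ⁅x, v⁆ = c • v := by
          simpa [hXdef, ad_apply] using Module.End.mem_eigenspace_iff.mp hv
        have hbr : ⁅z, v⁆ ∈ X.eigenspace (d + c) := by
          rw [Module.End.mem_eigenspace_iff]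
          rw [hXdef]
          simp only [ad_apply]
          rw [leibniz_lie, hzd', hvc, smul_lie, lie_smul, add_smul]
        have h1 : sh ⁅z, v⁆ = (f (d + c) : 𝕜) • ⁅z, v⁆ := hsh_eig _ _ hbr
        have h2 : sh v = (f c : 𝕜) • v := hsh_eig _ _ hv
        simp only [LinearMap.mem_ker, LinearMap.sub_apply, LinearMap.smul_apply,
          Module.End.mul_apply, ad_apply]
        rw [h1, h2, lie_smul]
        rw [show ((f (d + c) : ℚ) : 𝕜) = (f d : 𝕜) + (f c : 𝕜) by rw [map_add]; push_cast; ring]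
        rw [add_smul]
        abel
      rw [htop, top_le_iff] at hker
      have heq := LinearMap.ker_eq_top.mp (le_antisymm le_top hker.ge)
      exact sub_eq_zero.mp heq
    -- trace rearrangement
    have htr : ∀ u z : L, LinearMap.trace 𝕜 L (ad 𝕜 L ⁅u, z⁆ * sh)
        = LinearMap.trace 𝕜 L (ad 𝕜 L u * (ad 𝕜 L z * sh - sh * ad 𝕜 L z)) := by
      intro u z
      have hadlie : ad 𝕜 L ⁅u, z⁆ = ad 𝕜 L u * ad 𝕜 L z - ad 𝕜 L z * ad 𝕜 L u := by
        rw [LieHom.map_lie]; rfl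
      rw [hadlie, sub_mul, map_sub, mul_sub, map_sub, mul_assoc, mul_assoc]
      congr 1
      rw [LinearMap.trace_mul_comm, mul_assoc]
    -- the functional argument : trace (ad z * sh) = 0 for z ∈ Z
    have hker2 : ∀ hj : L, (∀ z' ∈ Z, killingForm 𝕜 L z' hj = 0) →
        ∀ z' ∈ Z, LinearMap.trace 𝕜 L (ad 𝕜 L hj * (ad 𝕜 L z' * sh - sh * ad 𝕜 L z')) = 0 := by
      intro hj horthj
      set ψ : L →ₗ[𝕜] 𝕜 := (LinearMap.trace 𝕜 L) ∘ₗ (LinearMap.mulLeft 𝕜 (ad 𝕜 L hj)) ∘ₗ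
        ((LinearMap.mulRight 𝕜 sh - LinearMap.mulLeft 𝕜 sh) ∘ₗ (ad 𝕜 L).toLinearMap) with hψdef
    -- Z ≤ ker ψ
      have hle : Z ≤ LinearMap.ker ψ := by
        refine (aux_decomp hxss hinvZ).trans ?_
        refine iSup_le fun d => ?_
        intro z' hz'
        have hc := hkey d z' hz'
        rw [Submodule.mem_inf] at hz'
        rw [LinearMap.mem_ker, hψdef]
        simp only [LinearMap.comp_apply, LinearMap.sub_apply, LinearMap.mulLeft_apply,
          LinearMap.mulRight_apply, LieHom.coe_toLinearMap]
        have hrw : ad 𝕜 L z' * sh - sh * ad 𝕜 L z' = -((f d : 𝕜) • ad 𝕜 L z') := by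
          rw [← hc]; abel
        rw [hrw, mul_neg, mul_smul_comm, map_neg, map_smul]
        have hkf : LinearMap.trace 𝕜 L (ad 𝕜 L hj * ad 𝕜 L z') = killingForm 𝕜 L hj z' := by
          rw [killingForm_apply_apply, Module.End.mul_eq_comp]
        rw [hkf, LieModule.traceForm_comm, horthj z' hz'.1]
        simp
      intro z' hz'
      have := hle hz'
      rw [LinearMap.mem_ker, hψdef] at this
      simpa only [LinearMap.comp_apply, LinearMap.sub_apply, LinearMap.mulLeft_apply,
        LinearMap.mulRight_apply, LieHom.coe_toLinearMap] using this
    have hφz : ∀ z ∈ Z, LinearMap.trace 𝕜 L (ad 𝕜 L z * sh) = 0 := by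
      set φ : L →ₗ[𝕜] 𝕜 := (LinearMap.trace 𝕜 L) ∘ₗ (LinearMap.mulRight 𝕜 sh) ∘ₗ
        (ad 𝕜 L).toLinearMap with hφdef
      have happ : ∀ z : L, φ z = LinearMap.trace 𝕜 L (ad 𝕜 L z * sh) := by
        intro z
        simp only [hφdef, LinearMap.comp_apply, LinearMap.mulRight_apply,
          LieHom.coe_toLinearMap]
      have hle : Z ≤ LinearMap.ker φ := by
        refine (main_decomp hss₁ hss₂ hcomm h11 h22 h12 h21).trans ?_
        refine iSup_le fun μ => iSup_le fun ν => ?_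
        intro w hw
        rw [Submodule.mem_inf] at hw
        obtain ⟨hw', hw2⟩ := hw
        rw [Submodule.mem_inf] at hw'
        obtain ⟨hwZ, hw1⟩ := hw'
        rw [LinearMap.mem_ker]
        rcases eq_or_ne μ 0 with rfl | hμ
        · rcases eq_or_ne ν 0 with rfl | hν
          · have hwH : w ∈ cent 𝕜 L {h₁, h₂} := by
              rw [mem_cent_pair]
              constructor
              · simpa [ad_apply] using Module.End.mem_eigenspace_iff.mp hw1
              · simpa [ad_apply] using Module.End.mem_eigenspace_iff.mp hw2
            have hbot : w ∈ cent 𝕜 L {h₁, h₂} ⊓ cent 𝕜 L {e₁, e₂} := ⟨hwH, hwZ⟩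
            rw [hmeet, Submodule.mem_bot] at hbot
            simp [hbot]
          · -- use h₂
            have hjw : ⁅h₂, w⁆ = ν • w := by
              simpa [ad_apply] using Module.End.mem_eigenspace_iff.mp hw2
            have hφbr : φ ⁅h₂, w⁆ = 0 := by
              rw [happ, htr h₂ w]
              exact hker2 h₂ (fun z' hz' => (horth z' hz').2) w hwZ
            rw [hjw, map_smul, smul_eq_mul] at hφbr
            exact (mul_eq_zero.mp hφbr).resolve_left hν
        · -- use h₁
          have hjw : ⁅h₁, w⁆ = μ • w := by
            simpa [ad_apply] using Module.End.mem_eigenspace_iff.mp hw1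
          have hφbr : φ ⁅h₁, w⁆ = 0 := by
            rw [happ, htr h₁ w]
            exact hker2 h₁ (fun z' hz' => (horth z' hz').1) w hwZ
          rw [hjw, map_smul, smul_eq_mul] at hφbr
          exact (mul_eq_zero.mp hφbr).resolve_left hμ
      intro z hz
      have := hle hz
      rw [LinearMap.mem_ker, happ] at this
      exact this
    have h0 : LinearMap.trace 𝕜 L (X * sh) = 0 := by
      rw [hXdef]; exact hφz x hxZ
    -- spectral computation of the trace
    have hdiag : ∀ i : (c : 𝕜) × Basis.ofVectorSpaceIndex 𝕜 (X.eigenspace c), (X * sh) (b i) = (i.1 * (f i.1 : 𝕜)) • b i := by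
      intro i
      have h2 := hsh_eig i.1 (b i) (hbmem i)
      have h1 : X (b i) = i.1 • b i := Module.End.mem_eigenspace_iff.mp (hbmem i)
      rw [Module.End.mul_apply, h2, map_smul, h1, smul_smul, mul_comm]
    have hsum : LinearMap.trace 𝕜 L (X * sh) = ∑ i : (c : 𝕜) × Basis.ofVectorSpaceIndex 𝕜 (X.eigenspace c), i.1 * (f i.1 : 𝕜) := by
      rw [LinearMap.trace_eq_matrix_trace 𝕜 b]
      rw [Matrix.trace]
      refine Finset.sum_congr rfl fun i _ => ?_
      rw [Matrix.diag_apply, LinearMap.toMatrix_apply, hdiag, map_smul, Basis.repr_self,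
        Finsupp.smul_apply, Finsupp.single_eq_same, smul_eq_mul, mul_one]
    have hQ : (0 : ℚ) = ∑ i : (c : 𝕜) × Basis.ofVectorSpaceIndex 𝕜 (X.eigenspace c), f i.1 * f i.1 := by
      have hk : (0 : 𝕜) = ∑ i : (c : 𝕜) × Basis.ofVectorSpaceIndex 𝕜 (X.eigenspace c), i.1 * (f i.1 : 𝕜) := by rw [← hsum, h0]
      calc (0 : ℚ) = f 0 := (map_zero f).symm
        _ = f (∑ i : (c : 𝕜) × Basis.ofVectorSpaceIndex 𝕜 (X.eigenspace c), i.1 * (f i.1 : 𝕜)) := by rw [← hk]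
        _ = ∑ i : (c : 𝕜) × Basis.ofVectorSpaceIndex 𝕜 (X.eigenspace c), f (i.1 * (f i.1 : 𝕜)) := map_sum f _ _
        _ = ∑ i : (c : 𝕜) × Basis.ofVectorSpaceIndex 𝕜 (X.eigenspace c), f i.1 * f i.1 := by
            refine Finset.sum_congr rfl fun i _ => ?_
            rw [show (i.1 * (f i.1 : 𝕜)) = (f i.1 : ℚ) • i.1 by rw [Rat.smul_def, mul_comm],
              map_smul, smul_eq_mul]
    intro i
    have hnn : ∀ j ∈ (Finset.univ : Finset ((c : 𝕜) × Basis.ofVectorSpaceIndex 𝕜 (X.eigenspace c))),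
        (0:ℚ) ≤ f j.1 * f j.1 := fun j _ => mul_self_nonneg _
    have := (Finset.sum_eq_zero_iff_of_nonneg hnn).mp hQ.symm i (Finset.mem_univ i)
    exact mul_self_eq_zero.mp this
  -- conclude that all eigenvalues vanish, hence X = 0, hence x = 0
  have hX0 : X = 0 := by
    apply b.ext
    intro i
    have hmem := Module.End.mem_eigenspace_iff.mp (hbmem i)
    have hc0 : (i.1 : 𝕜) = 0 :=
      (Module.forall_dual_apply_eq_zero_iff ℚ i.1).mp (fun f => hall f i)
    rw [hmem, hc0, zero_smul, LinearMap.zero_apply]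
  have hcenter : x ∈ LieAlgebra.center 𝕜 L := by
    rw [LieAlgebra.center, LieModule.mem_maxTrivSubmodule]
    intro y
    have hxy : ⁅x, y⁆ = 0 := by
      have := LinearMap.congr_fun hX0 y
      simpa [hXdef, ad_apply] using this
    rw [← lie_skew, hxy, neg_zero]
  rw [LieAlgebra.center_eq_bot 𝕜 L] at hcenter
  exact (LieSubmodule.mem_bot _).mp hcenter

end Theorems
end Aux

set_option linter.unusedSectionVars true

section Statement1

variable (𝕜 : Type*) [Field 𝕜] [IsAlgClosed 𝕜] [CharZero 𝕜]
variable (L : Type*) [LieRing L] [LieAlgebra 𝕜 L] [Module.Finite 𝕜 L]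
  [LieAlgebra.IsSemisimple 𝕜 L]

/-- Corollary 1.4. If `𝐡` is a semisimple pair satisfying the
commutation relations and `𝔷_𝔤(𝐡) ∩ 𝔷_𝔤(𝐞) = 0`, then `𝐡` is a characteristic of `𝐞`
and `𝔷_𝔤(𝐞)` contains no nonzero semisimple elements. -/
theorem statement1 (e₁ e₂ h₁ h₂ : L) (hnp : IsNilpotentPair 𝕜 L e₁ e₂)
    (hss₁ : (ad 𝕜 L h₁).IsSemisimple) (hss₂ : (ad 𝕜 L h₂).IsSemisimple)
    (hcomm : ⁅h₁, h₂⁆ = 0)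
    (h11 : ⁅h₁, e₁⁆ = e₁) (h22 : ⁅h₂, e₂⁆ = e₂)
    (h12 : ⁅h₁, e₂⁆ = 0) (h21 : ⁅h₂, e₁⁆ = 0)
    (hmeet : cent 𝕜 L {h₁, h₂} ⊓ cent 𝕜 L {e₁, e₂} = ⊥) :
    IsCharacteristic 𝕜 L e₁ e₂ h₁ h₂ ∧
    ∀ x ∈ cent 𝕜 L {e₁, e₂}, (ad 𝕜 L x).IsSemisimple → x = 0 := by
  refine ⟨⟨hss₁, hss₂, hcomm, h11, h22, h12, h21, ?_⟩, ?_⟩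
  · exact part1 hss₁ hss₂ hcomm h11 h22 h12 h21 hmeet
  · exact part2 hss₁ hss₂ hcomm h11 h22 h12 h21 hmeet

end Statement1
end

section
/- Let 𝐞 = (e₁,e₂) be a rectangular nilpotent pair in 𝔤 (so there exist commuting sl₂-triples {e₁,2h₁,f₁} and {e₂,2h₂,f₂} where 𝐡 = (h₁,h₂) is a characteristic of 𝐞). Then 𝐞 is even, i.e. dim 𝔷_𝔤(𝐞) = dim 𝔷_𝔤(𝐡), if and only if both e₁ and e₂ are even nilpotent elements of 𝔤. -/
/-!
Common definitions for formalizing "Nilpotent pairs in semisimple Lie algebras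
and their characteristics" (D. Panyushev).
-/

open LieAlgebra Module Submodule

attribute [local instance 100] LieRing.ofAssociativeRing

section Sl2AuxSection

set_option linter.unusedSectionVars false
set_option maxHeartbeats 1000000

open Module Submodule

namespace Sl2Aux

variable {𝕜 : Type*} [Field 𝕜] [IsAlgClosed 𝕜] [CharZero 𝕜]
variable {V : Type*} [AddCommGroup V] [Module 𝕜 V] [FiniteDimensional 𝕜 V]

/-- Abstract commutation relations of an `sl₂`-triple of endomorphisms with semisimple `H`. -/
structure Sl2Rel (E H F : Module.End 𝕜 V) : Prop where
  he : ⁅H, E⁆ = 2 • E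
  hf : ⁅H, F⁆ = -(2 • F)
  ef : ⁅E, F⁆ = H
  hss : H.IsSemisimple

namespace Sl2Rel

variable {E H F : Module.End 𝕜 V} {r : Sl2Rel E H F}
include r

lemma e_eq_zero (h0 : H = 0) : E = 0 := by
  have h := r.he
  rw [h0, zero_lie] at h
  have h2 : (2:𝕜) • E = 0 := by
    rw [← Nat.cast_ofNat (n := 2), Nat.cast_smul_eq_nsmul]; exact h.symm
  exact (smul_eq_zero.mp h2).resolve_left two_ne_zero

lemma apply_E_mem {μ : 𝕜} {v : V} (hv : v ∈ H.eigenspace μ) :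
    E v ∈ H.eigenspace (μ + 2) := by
  rw [Module.End.mem_eigenspace_iff] at hv ⊢
  have h := LinearMap.congr_fun r.he v
  simp only [Ring.lie_def, LinearMap.sub_apply, Module.End.mul_apply, LinearMap.smul_apply] at h
  have h2 : H (E v) = E (H v) + 2 • E v := by rw [← h]; abel
  rw [h2, hv, map_smul]
  module

lemma apply_F_mem {μ : 𝕜} {v : V} (hv : v ∈ H.eigenspace μ) :
    F v ∈ H.eigenspace (μ - 2) := by
  rw [Module.End.mem_eigenspace_iff] at hv ⊢
  have h := LinearMap.congr_fun r.hf v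
  simp only [Ring.lie_def, LinearMap.sub_apply, Module.End.mul_apply, LinearMap.neg_apply,
    LinearMap.smul_apply] at h
  rw [sub_eq_iff_eq_add] at h
  rw [h, hv, map_smul]
  module

lemma triple (h0 : H ≠ 0) : IsSl2Triple H E F := ⟨h0, r.ef, r.he, r.hf⟩

lemma prim_exists_nat {μ : 𝕜} {v : V} (hv : v ∈ H.eigenspace μ) (hv0 : v ≠ 0)
    (hEv : E v = 0) : ∃ n : ℕ, μ = n := by
  by_cases h0 : H = 0
  · refine ⟨0, ?_⟩
    have hm := Module.End.mem_eigenspace_iff.mp hv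
    rw [h0] at hm
    simp only [LinearMap.zero_apply] at hm
    have := (smul_eq_zero.mp hm.symm).resolve_right hv0
    simpa using this
  · have t := r.triple h0
    have P : t.HasPrimitiveVectorWith v μ :=
      ⟨hv0, by simpa using (Module.End.mem_eigenspace_iff.mp hv), by simpa using hEv⟩
    exact P.exists_nat

lemma iSup_eigenspace_eq_top : ⨆ μ, H.eigenspace μ = ⊤ := by
  have h := Module.End.iSup_maxGenEigenspace_eq_top H
  simpa only [r.hss.isFinitelySemisimple.maxGenEigenspace_eq_eigenspace] using h

omit r in
lemma finite_eigen (X : Module.End 𝕜 V) : {μ : 𝕜 | X.eigenspace μ ≠ ⊥}.Finite := by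
  have hmp : minpoly 𝕜 X ≠ 0 := minpoly.ne_zero (Algebra.IsIntegral.isIntegral (R := 𝕜) X)
  apply (Polynomial.finite_setOf_isRoot hmp).subset
  intro μ hμ
  exact Module.End.hasEigenvalue_iff_isRoot.mp (Module.End.hasEigenvalue_iff.mpr hμ)

lemma pow_E_mem {μ : 𝕜} {v : V} (hv : v ∈ H.eigenspace μ) (k : ℕ) :
    (E ^ k) v ∈ H.eigenspace (μ + 2 * k) := by
  induction k with
  | zero => simpa using hv
  | succ k ih =>
      have h2 := r.apply_E_mem ih
      rw [pow_succ', Module.End.mul_apply]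
      have hcast : μ + 2 * ((k + 1 : ℕ) : 𝕜) = μ + 2 * (k : ℕ) + 2 := by push_cast; ring
      rw [hcast]
      exact h2

lemma isNilpotent_E : IsNilpotent E := by
  obtain ⟨S, hS⟩ := (finite_eigen H).exists_finset_coe
  refine ⟨S.card + 1, ?_⟩
  have key : ∀ μ : 𝕜, H.eigenspace μ ≤ LinearMap.ker (E ^ (S.card + 1)) := by
    intro μ v hv
    rw [LinearMap.mem_ker]
    by_contra hne
    -- all powers up to S.card+1 are nonzero... indeed (E^k) v ≠ 0 for k ≤ S.card + 1
    have hk : ∀ k, k ≤ S.card + 1 → (E ^ k) v ≠ 0 := by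
      intro k hkle h0
      apply hne
      obtain ⟨j, hj⟩ := Nat.exists_eq_add_of_le hkle
      rw [hj, add_comm, pow_add, Module.End.mul_apply, h0, map_zero]
    -- so μ + 2k is an eigenvalue for all k ≤ S.card + 1; injectivity gives card contradiction
    have hmem : ∀ k : Fin (S.card + 2), (μ + 2 * (k : ℕ)) ∈ S := by
      intro k
      have hkk : ((k : ℕ)) ≤ S.card + 1 := by omega
      have hvk := r.pow_E_mem hv (k : ℕ)
      have : H.eigenspace (μ + 2 * (k : ℕ)) ≠ ⊥ := by
        intro hbot
        exact hk _ hkk (by rw [← Submodule.mem_bot (R := 𝕜), ← hbot]; exact hvk)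
      have : (μ + 2 * (k : ℕ)) ∈ (S : Set 𝕜) := by rw [hS]; exact this
      exact_mod_cast this
    have hinj : Function.Injective (fun k : Fin (S.card + 2) => μ + 2 * (k : ℕ)) := by
      intro a b hab
      simp only [add_right_injective, mul_right_injective₀] at hab
      have : ((a : ℕ) : 𝕜) = ((b : ℕ) : 𝕜) := by
        field_simp at hab
        have h2 := add_left_cancel hab
        push_cast at h2
        exact mul_left_cancel₀ two_ne_zero h2
      exact Fin.ext (Nat.cast_injective this)
    have := Finset.card_le_card_of_injOn (s := (Finset.univ : Finset (Fin (S.card + 2))))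
      (fun k : Fin (S.card + 2) => μ + 2 * (k : ℕ)) (fun k _ => hmem k) (hinj.injOn)
    simp at this
  have : (⊤ : Submodule 𝕜 V) ≤ LinearMap.ker (E ^ (S.card + 1)) := by
    rw [← r.iSup_eigenspace_eq_top]
    exact iSup_le key
  exact LinearMap.ker_eq_top.mp (top_le_iff.mp this)

omit r in
lemma toEnd_end (X : Module.End 𝕜 V) : LieModule.toEnd 𝕜 (Module.End 𝕜 V) V X = X := by
  rw [LieModule.toEnd_module_end]; rfl

/-- Surjectivity: `E` maps the `n`-eigenspace onto the `(n+2)`-eigenspace, for `n : ℕ`. -/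
lemma surj (n : ℕ) : H.eigenspace ((n : 𝕜) + 2) ≤ (H.eigenspace (n : 𝕜)).map E := by
  by_cases h0 : H = 0
  · intro v hv
    have hm := Module.End.mem_eigenspace_iff.mp hv
    rw [h0] at hm
    simp only [LinearMap.zero_apply] at hm
    have hn2 : ((n : 𝕜) + 2) ≠ 0 := by
      have hcast : ((n : 𝕜) + 2) = ((n+2 : ℕ) : 𝕜) := by push_cast; ring
      rw [hcast]
      exact Nat.cast_ne_zero.mpr (by omega)
    have hv0 : v = 0 := (smul_eq_zero.mp hm.symm).resolve_left hn2
    simp [hv0]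
  have t := r.triple h0
  have hnat1 : ∀ k : ℕ, ((k:𝕜)+1) ≠ 0 := by
    intro k
    have hcast : ((k:𝕜)+1) = ((k+1:ℕ):𝕜) := by push_cast; ring
    rw [hcast]
    exact Nat.cast_ne_zero.mpr k.succ_ne_zero
  suffices Hyp : ∀ m : ℕ, ∀ w ∈ H.eigenspace ((n:𝕜)+2), (E ^ (m+1)) w = 0 →
      w ∈ (H.eigenspace (n:𝕜)).map E by
    intro w hw
    obtain ⟨N, hN⟩ := r.isNilpotent_E
    refine Hyp N w hw ?_
    rw [pow_succ, Module.End.mul_apply, hN, LinearMap.zero_apply]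
  intro m
  induction m using Nat.strong_induction_on with
  | _ m IH =>
  intro w hw hEw
  by_cases hEm : (E ^ m) w = 0
  · match m with
    | 0 => simp only [pow_zero, Module.End.one_apply] at hEm; simp [hEm]
    | m' + 1 => exact IH m' (by omega) w hw hEm
  · set u := (E ^ m) w with hu_def
    set μ : 𝕜 := (n:𝕜) + 2 + 2*m with hμ_def
    have hu : u ∈ H.eigenspace μ := r.pow_E_mem hw m
    have hEu : E u = 0 := by
      rw [hu_def, ← Module.End.mul_apply, ← pow_succ']
      exact hEw
    have P : t.HasPrimitiveVectorWith u μ :=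
      ⟨hEm, by simpa using Module.End.mem_eigenspace_iff.mp hu, by simpa using hEu⟩
    have hFpow : ∀ k : ℕ, H ((F^k) u) = (μ - 2*k) • (F^k) u := by
      intro k
      have hh := P.lie_h_pow_toEnd_f k
      rw [toEnd_end] at hh
      simpa using hh
    have hFm : ∀ k : ℕ, (F^k) u ∈ H.eigenspace (μ - 2*k) := fun k =>
      Module.End.mem_eigenspace_iff.mpr (hFpow k)
    have hEF : ∀ k : ℕ, E ((F^(k+1)) u) = (((k:𝕜)+1) * (μ - k)) • (F^k) u := by
      intro k
      have hh := P.lie_e_pow_succ_toEnd_f k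
      rw [toEnd_end] at hh
      simpa using hh
    have hμk : ∀ k : ℕ, k ≤ m → μ - (k:𝕜) ≠ 0 := by
      intro k hk
      have hle : k ≤ n + 2 + 2*m := by omega
      have : μ - (k:𝕜) = ((n + 2 + 2*m - k : ℕ) : 𝕜) := by
        rw [Nat.cast_sub hle]
        push_cast [hμ_def]
        ring
      rw [this]
      exact Nat.cast_ne_zero.mpr (by omega)
    have key : ∀ j : ℕ, j ≤ m → ∃ c : 𝕜, c ≠ 0 ∧ (E^j) ((F^j) u) = c • u := by
      intro j
      induction j with
      | zero => exact fun _ => ⟨1, one_ne_zero, by simp⟩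
      | succ j ihj =>
        intro hj
        obtain ⟨c, hc0, hc⟩ := ihj (by omega)
        refine ⟨(((j:𝕜)+1) * (μ - j)) * c, mul_ne_zero (mul_ne_zero
          (hnat1 j) (hμk j (by omega))) hc0, ?_⟩
        rw [pow_succ, Module.End.mul_apply, hEF j, map_smul, hc, smul_smul]
    obtain ⟨c, hc0, hc⟩ := key m le_rfl
    have hμm2 : μ - 2*((m:𝕜)+1) = (n:𝕜) := by rw [hμ_def]; ring
    have hμm : μ - 2*(m:𝕜) = (n:𝕜) + 2 := by rw [hμ_def]; ring
    have piece1 : (F^m) u ∈ (H.eigenspace (n:𝕜)).map E := by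
      have h1 := hEF m
      have hco : (((m:𝕜)+1) * (μ - m)) ≠ 0 :=
        mul_ne_zero (hnat1 m) (hμk m le_rfl)
      refine ⟨(((m:𝕜)+1)*(μ - m))⁻¹ • (F^(m+1)) u, ?_, ?_⟩
      · apply Submodule.smul_mem
        have h2 := hFm (m+1)
        rw [show ((m:ℕ)+1 : ℕ) = m + 1 from rfl] at h2
        push_cast at h2
        rw [hμm2] at h2
        exact h2
      · rw [map_smul, h1, smul_smul, inv_mul_cancel₀ hco, one_smul]
    set w' := w - c⁻¹ • (F^m) u with hw'_def
    have hw'mem : w' ∈ H.eigenspace ((n:𝕜)+2) := by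
      apply sub_mem hw
      apply Submodule.smul_mem
      have h2 := hFm m
      rw [hμm] at h2
      exact h2
    have hEw' : (E^m) w' = 0 := by
      rw [hw'_def, map_sub, map_smul, hc, smul_smul, inv_mul_cancel₀ hc0, one_smul, ← hu_def,
        sub_self]
    have hw'' : w' ∈ (H.eigenspace (n:𝕜)).map E := by
      match m with
      | 0 =>
        simp only [pow_zero, Module.End.one_apply] at hEw'
        simp [hEw']
      | m' + 1 => exact IH m' (by omega) w' hw'mem hEw'
    have hsplit : w = w' + c⁻¹ • (F^m) u := by rw [hw'_def]; abel
    rw [hsplit]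
    exact add_mem hw'' (Submodule.smul_mem _ _ piece1)

lemma eigen_one_bot_of_even
    (heven : ∀ μ : 𝕜, H.HasEigenvalue μ → ∃ m : ℤ, μ = ((2*m : ℤ) : 𝕜)) :
    H.eigenspace 1 = ⊥ := by
  by_contra h
  obtain ⟨m, hm⟩ := heven 1 (Module.End.hasEigenvalue_iff.mpr h)
  have : ((1:ℤ) : 𝕜) = ((2*m : ℤ) : 𝕜) := by rw [← hm]; norm_num
  have := Int.cast_injective this
  omega

lemma even_of_eigen_one_bot (h1 : H.eigenspace 1 = ⊥) {μ : 𝕜} (hμ : H.HasEigenvalue μ) :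
    ∃ m : ℤ, μ = ((2*m : ℤ) : 𝕜) := by
  classical
  obtain ⟨v, hv, hv0⟩ := (Submodule.ne_bot_iff _).mp (Module.End.hasEigenvalue_iff.mp hμ)
  by_cases h0 : H = 0
  · refine ⟨0, ?_⟩
    have hm := Module.End.mem_eigenspace_iff.mp hv
    rw [h0] at hm
    simp only [LinearMap.zero_apply] at hm
    have := (smul_eq_zero.mp hm.symm).resolve_right hv0
    simpa using this
  have hne : ∃ j : ℕ, H.eigenspace (μ + 2*(j:𝕜)) = ⊥ := by
    by_contra hc
    push_neg at hc
    refine (finite_eigen H).not_infinite (Set.infinite_of_injective_forall_mem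
      (f := fun j : ℕ => μ + 2*(j:𝕜)) ?_ (fun j => hc j))
    intro a b hab
    simp only [add_right_inj] at hab
    have h2 : (a:𝕜) = (b:𝕜) := by
      have := mul_left_cancel₀ (two_ne_zero (α := 𝕜)) hab
      exact this
    exact Nat.cast_injective h2
  have hj0' : H.eigenspace (μ + 2*((0:ℕ):𝕜)) ≠ ⊥ := by
    simpa using Module.End.hasEigenvalue_iff.mp hμ
  obtain ⟨j₀, hj₀eq⟩ : ∃ k, k = Nat.find hne := ⟨_, rfl⟩
  have hj₀ : H.eigenspace (μ + 2*((j₀:ℕ):𝕜)) = ⊥ := by rw [hj₀eq]; exact Nat.find_spec hne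
  have hj₀pos : 0 < j₀ := by
    rcases Nat.eq_zero_or_pos j₀ with h | h
    · exfalso
      apply hj0'
      rw [h] at hj₀
      exact hj₀
    · exact h
  obtain ⟨j, hjeq⟩ : ∃ k, k = j₀ - 1 := ⟨_, rfl⟩
  have hjlt : j < j₀ := by omega
  have hjne : H.eigenspace (μ + 2*((j:ℕ):𝕜)) ≠ ⊥ := Nat.find_min hne (by omega : j < Nat.find hne)
  obtain ⟨w, hw, hw0⟩ := (Submodule.ne_bot_iff _).mp hjne
  have hEw : E w = 0 := by
    have hmem := r.apply_E_mem hw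
    have hcast : μ + 2*((j:ℕ):𝕜) + 2 = μ + 2*((j₀:ℕ):𝕜) := by
      have : (j₀ : ℕ) = j + 1 := by omega
      rw [this]
      push_cast
      ring
    rw [hcast, hj₀] at hmem
    simpa using hmem
  obtain ⟨N, hN⟩ := r.prim_exists_nat hw hw0 hEw
  rcases Nat.even_or_odd N with heN | hoN
  · obtain ⟨l, hl⟩ := heN
    refine ⟨(l : ℤ) - j, ?_⟩
    push_cast
    rw [hl] at hN
    push_cast at hN
    linear_combination hN
  · exfalso
    obtain ⟨l, hl⟩ := hoN
    have t := r.triple h0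
    have P : t.HasPrimitiveVectorWith w (μ + 2*(j:𝕜)) :=
      ⟨hw0, by simpa using Module.End.mem_eigenspace_iff.mp hw, by simpa using hEw⟩
    have hne0 : ((F^l) w) ≠ 0 := by
      have hh := P.pow_toEnd_f_ne_zero_of_eq_nat hN (by omega : l ≤ N)
      rw [toEnd_end] at hh
      exact hh
    have hmem : (F^l) w ∈ H.eigenspace 1 := by
      have hh := P.lie_h_pow_toEnd_f l
      rw [toEnd_end] at hh
      simp only [Module.End.lie_apply] at hh
      have hev : (μ + 2*(j:𝕜)) - 2*(l:𝕜) = 1 := by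
        rw [hN, hl]
        push_cast
        ring
      rw [hev] at hh
      exact Module.End.mem_eigenspace_iff.mpr (by simpa using hh)
    rw [h1] at hmem
    simp only [Submodule.mem_bot] at hmem
    exact hne0 hmem

/-- Restriction of an `Sl2Rel` to a jointly invariant submodule. -/
lemma restrict {p : Submodule 𝕜 V}
    (hE : ∀ x ∈ p, E x ∈ p) (hH : ∀ x ∈ p, H x ∈ p) (hF : ∀ x ∈ p, F x ∈ p) :
    Sl2Rel (E.restrict hE) (H.restrict hH) (F.restrict hF) := by
  refine ⟨?_, ?_, ?_, r.hss.restrict ((Module.End.mem_invtSubmodule H).mpr hH)⟩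
  · refine LinearMap.ext fun v => Subtype.ext ?_
    have h := LinearMap.congr_fun r.he (v : V)
    simp only [Ring.lie_def, LinearMap.sub_apply, Module.End.mul_apply,
      LinearMap.smul_apply] at h ⊢
    simpa [LinearMap.restrict_coe_apply] using h
  · refine LinearMap.ext fun v => Subtype.ext ?_
    have h := LinearMap.congr_fun r.hf (v : V)
    simp only [Ring.lie_def, LinearMap.sub_apply, Module.End.mul_apply,
      LinearMap.smul_apply, LinearMap.neg_apply] at h ⊢
    simpa [LinearMap.restrict_coe_apply] using h
  · refine LinearMap.ext fun v => Subtype.ext ?_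
    have h := LinearMap.congr_fun r.ef (v : V)
    simp only [Ring.lie_def, LinearMap.sub_apply, Module.End.mul_apply] at h ⊢
    simpa [LinearMap.restrict_coe_apply] using h

end Sl2Rel

omit [IsAlgClosed 𝕜] [CharZero 𝕜] in
lemma finrank_finsetSup {ι : Type*} [DecidableEq ι] (S : Finset ι) (p : ι → Submodule 𝕜 V)
    (h : iSupIndep p) :
    finrank 𝕜 (S.sup p : Submodule 𝕜 V) = ∑ a ∈ S, finrank 𝕜 (p a) := by
  classical
  induction S using Finset.cons_induction with
  | empty => simp [finrank_bot]
  | cons a S haS ih =>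
    rw [Finset.sup_cons, Finset.sum_cons, ← ih]
    have hdisj : Disjoint (p a) (S.sup p : Submodule 𝕜 V) := by
      refine (h a).mono_right ?_
      refine Finset.sup_le fun b hb => ?_
      exact le_iSup₂ (f := fun (b : ι) (_ : b ≠ a) => p b) b (by rintro rfl; exact haS hb)
    have hh := Submodule.finrank_sup_add_finrank_inf_eq (p a) (S.sup p : Submodule 𝕜 V)
    rw [hdisj.eq_bot] at hh
    simpa [finrank_bot] using hh

lemma iSup_eigenspace_eq_top_of_isSemisimple {X : Module.End 𝕜 V} (hss : X.IsSemisimple) :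
    ⨆ μ, X.eigenspace μ = ⊤ := by
  have h := Module.End.iSup_maxGenEigenspace_eq_top X
  simpa only [hss.isFinitelySemisimple.maxGenEigenspace_eq_eigenspace] using h

omit [IsAlgClosed 𝕜] [CharZero 𝕜] in
lemma finrank_eq_sum_eigenspace (X : Module.End 𝕜 V) (hdiag : ⨆ μ, X.eigenspace μ = ⊤)
    (S : Finset 𝕜) (hS : ∀ μ : 𝕜, X.eigenspace μ ≠ ⊥ → μ ∈ S) :
    finrank 𝕜 V = ∑ μ ∈ S, finrank 𝕜 (X.eigenspace μ) := by
  classical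
  have hind : iSupIndep (fun μ => X.eigenspace μ) := X.independent_genEigenspace 1
  have hsup : (S.sup (fun μ => X.eigenspace μ) : Submodule 𝕜 V) = ⊤ := by
    refine le_antisymm le_top ?_
    rw [← hdiag]
    refine iSup_le fun μ => ?_
    by_cases h : X.eigenspace μ = ⊥
    · rw [h]; exact bot_le
    · exact Finset.le_sup (hS μ h)
  rw [← finrank_finsetSup S _ hind, hsup, finrank_top]

omit [IsAlgClosed 𝕜] [CharZero 𝕜] in
lemma map_subtype_eigenspace_restrict (X : Module.End 𝕜 V) {p : Submodule 𝕜 V}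
    (hX : ∀ x ∈ p, X x ∈ p) (μ : 𝕜) :
    (Module.End.eigenspace (X.restrict hX) μ).map p.subtype = X.eigenspace μ ⊓ p := by
  ext v
  constructor
  · rintro ⟨⟨w, hwp⟩, hw, rfl⟩
    have hw' := Module.End.mem_eigenspace_iff.mp hw
    refine ⟨Module.End.mem_eigenspace_iff.mpr ?_, hwp⟩
    have := congrArg (Subtype.val) hw'
    simpa [LinearMap.restrict_coe_apply] using this
  · rintro ⟨hv1, hv2⟩
    refine ⟨⟨v, hv2⟩, Module.End.mem_eigenspace_iff.mpr (Subtype.ext ?_), rfl⟩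
    simpa [LinearMap.restrict_coe_apply] using Module.End.mem_eigenspace_iff.mp hv1

namespace Sl2Rel

variable {E H F : Module.End 𝕜 V} {r : Sl2Rel E H F}
include r

lemma ker_E_invariant : ∀ x ∈ LinearMap.ker E, H x ∈ LinearMap.ker E := by
  intro x hx
  rw [LinearMap.mem_ker] at hx ⊢
  have h := LinearMap.congr_fun r.he x
  simp only [Ring.lie_def, LinearMap.sub_apply, Module.End.mul_apply, LinearMap.smul_apply] at h
  -- h : H (E x) - E (H x) = 2 • E x
  rw [hx, map_zero, zero_sub, smul_zero, neg_eq_zero] at h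
  exact h

/-- The key dimension count: `dim ker E = dim V₀ + dim V₁`. -/
theorem finrank_ker_eq :
    finrank 𝕜 (LinearMap.ker E) =
      finrank 𝕜 (H.eigenspace 0) + finrank 𝕜 (H.eigenspace 1) := by
  classical
  set K := LinearMap.ker E with hKdef
  have hKH : ∀ x ∈ K, H x ∈ K := r.ker_E_invariant
  set H' : Module.End 𝕜 K := H.restrict hKH with hH'def
  have hss' : H'.IsSemisimple := r.hss.restrict ((Module.End.mem_invtSubmodule H).mpr hKH)
  have hdiag' : ⨆ μ, Module.End.eigenspace H' μ = ⊤ := iSup_eigenspace_eq_top_of_isSemisimple hss'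
  -- a bound on the natural eigenvalues of `H`
  have hTfin : {n : ℕ | H.eigenspace ((n:ℕ):𝕜) ≠ ⊥}.Finite := by
    apply Set.Finite.preimage (f := fun n : ℕ => ((n:ℕ):𝕜)) ?_ (finite_eigen H)
    exact Set.injOn_of_injective Nat.cast_injective
  obtain ⟨M₀, hM₀⟩ := hTfin.bddAbove
  obtain ⟨M, hMeq⟩ : ∃ k, k = M₀ + 1 := ⟨_, rfl⟩
  have hDzero : ∀ n : ℕ, M ≤ n → H.eigenspace ((n:ℕ):𝕜) = ⊥ := by
    intro n hn
    by_contra h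
    have := hM₀ h
    omega
  -- the eigenvalues of `H'` are natural numbers `< M`
  have hev' : ∀ μ : 𝕜, Module.End.eigenspace H' μ ≠ ⊥ → ∃ n : ℕ, n < M ∧ μ = (n:𝕜) := by
    intro μ hne
    obtain ⟨⟨v, hvK⟩, hv, hv0⟩ := (Submodule.ne_bot_iff _).mp hne
    have hvV : v ∈ H.eigenspace μ := by
      refine Module.End.mem_eigenspace_iff.mpr ?_
      have := congrArg Subtype.val (Module.End.mem_eigenspace_iff.mp hv)
      simpa [hH'def, LinearMap.restrict_coe_apply] using this
    have hv0' : v ≠ 0 := fun h => hv0 (Subtype.ext h)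
    obtain ⟨n, rfl⟩ := r.prim_exists_nat hvV hv0' (LinearMap.mem_ker.mp hvK)
    refine ⟨n, ?_, rfl⟩
    by_contra h
    have : H.eigenspace ((n:ℕ):𝕜) = ⊥ := hDzero n (by omega)
    rw [this] at hvV
    exact hv0' (by simpa using hvV)
  set SK : Finset 𝕜 := (Finset.range M).image (fun n : ℕ => (n:𝕜)) with hSKdef
  have hcount1 : finrank 𝕜 K = ∑ μ ∈ SK, finrank 𝕜 (Module.End.eigenspace H' μ) :=
    finrank_eq_sum_eigenspace H' hdiag' SK (fun μ h => by
      obtain ⟨n, hn, rfl⟩ := hev' μ h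
      exact Finset.mem_image.mpr ⟨n, Finset.mem_range.mpr hn, rfl⟩)
  have hcount2 : finrank 𝕜 K =
      ∑ n ∈ Finset.range M, finrank 𝕜 (Module.End.eigenspace H' ((n:ℕ):𝕜)) := by
    rw [hcount1, hSKdef, Finset.sum_image]
    intro a _ b _ hab
    exact Nat.cast_injective hab
  -- identify each summand
  have hident : ∀ n : ℕ, finrank 𝕜 (Module.End.eigenspace H' ((n:ℕ):𝕜)) =
      finrank 𝕜 ((H.eigenspace ((n:ℕ):𝕜) ⊓ K : Submodule 𝕜 V)) := by
    intro n
    rw [← map_subtype_eigenspace_restrict H hKH ((n:ℕ):𝕜), Submodule.finrank_map_subtype_eq]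
  -- rank-nullity with surjectivity: C n + D (n+2) = D n
  have hCD : ∀ n : ℕ,
      finrank 𝕜 ((H.eigenspace ((n:ℕ):𝕜) ⊓ K : Submodule 𝕜 V))
        + finrank 𝕜 (H.eigenspace (((n+2:ℕ)):𝕜)) = finrank 𝕜 (H.eigenspace ((n:ℕ):𝕜)) := by
    intro n
    have hmap : ∀ x ∈ H.eigenspace ((n:ℕ):𝕜), E x ∈ H.eigenspace (((n:ℕ):𝕜) + 2) :=
      fun x hx => r.apply_E_mem hx
    set En := E.restrict hmap with hEndef
    have hsurj : LinearMap.range En = ⊤ := by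
      rw [LinearMap.range_eq_top]
      rintro ⟨y, hy⟩
      obtain ⟨x, hx, hxy⟩ := r.surj n hy
      exact ⟨⟨x, hx⟩, Subtype.ext (by simpa [hEndef, LinearMap.restrict_coe_apply] using hxy)⟩
    have hrn := LinearMap.finrank_range_add_finrank_ker En
    rw [hsurj, finrank_top] at hrn
    -- identify the kernel
    have hker : (LinearMap.ker En).map (H.eigenspace ((n:ℕ):𝕜)).subtype
        = H.eigenspace ((n:ℕ):𝕜) ⊓ K := by
      ext v
      constructor
      · rintro ⟨⟨w, hwp⟩, hw, rfl⟩
        refine ⟨hwp, ?_⟩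
        have := congrArg Subtype.val (LinearMap.mem_ker.mp hw)
        simpa [hEndef, LinearMap.restrict_coe_apply, hKdef, LinearMap.mem_ker] using this
      · rintro ⟨hv1, hv2⟩
        refine ⟨⟨v, hv1⟩, LinearMap.mem_ker.mpr (Subtype.ext ?_), rfl⟩
        simpa [hEndef, LinearMap.restrict_coe_apply] using LinearMap.mem_ker.mp hv2
    have hkerrk : finrank 𝕜 (LinearMap.ker En) =
        finrank 𝕜 ((H.eigenspace ((n:ℕ):𝕜) ⊓ K : Submodule 𝕜 V)) := by
      rw [← hker, Submodule.finrank_map_subtype_eq]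
    have hcast : (((n:ℕ):𝕜) + 2) = (((n+2:ℕ)):𝕜) := by push_cast; ring
    rw [hkerrk, hcast] at hrn
    omega
  -- telescoping
  set D : ℕ → ℕ := fun n => finrank 𝕜 (H.eigenspace ((n:ℕ):𝕜)) with hDdef
  set C : ℕ → ℕ := fun n => finrank 𝕜 ((H.eigenspace ((n:ℕ):𝕜) ⊓ K : Submodule 𝕜 V)) with hCdef
  have hKC : finrank 𝕜 K = ∑ n ∈ Finset.range M, C n := by
    rw [hcount2]
    exact Finset.sum_congr rfl (fun n _ => hident n)
  have hsum3 : ∑ n ∈ Finset.range M, C n + ∑ n ∈ Finset.range M, D (n+2)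
      = ∑ n ∈ Finset.range M, D n := by
    rw [← Finset.sum_add_distrib]
    exact Finset.sum_congr rfl (fun n _ => hCD n)
  have hvanish : ∀ n, M ≤ n → D n = 0 := by
    intro n hn
    rw [hDdef]
    simp only
    rw [hDzero n hn]
    exact finrank_bot 𝕜 V
  have hsum1 : ∑ n ∈ Finset.range (M+2), D n = ∑ n ∈ Finset.range M, D n := by
    rw [Finset.sum_range_succ, Finset.sum_range_succ, hvanish M le_rfl,
      hvanish (M+1) (by omega), add_zero, add_zero]
  have hsum2 : ∑ n ∈ Finset.range (M+2), D n = D 0 + D 1 + ∑ n ∈ Finset.range M, D (n+2) := by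
    rw [Finset.sum_range_succ' _ (M+1), Finset.sum_range_succ' _ M]
    simp only [show ∀ x:ℕ, x+1+1 = x+2 from fun x => by omega]
    norm_num
    omega
  have hfinal : finrank 𝕜 K = D 0 + D 1 := by omega
  have h0 : D 0 = finrank 𝕜 (H.eigenspace 0) := by
    show finrank 𝕜 (H.eigenspace (((0:ℕ)):𝕜)) = finrank 𝕜 (H.eigenspace 0)
    rw [Nat.cast_zero]
  have h1 : D 1 = finrank 𝕜 (H.eigenspace 1) := by
    show finrank 𝕜 (H.eigenspace (((1:ℕ)):𝕜)) = finrank 𝕜 (H.eigenspace 1)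
    rw [Nat.cast_one]
  rw [← h0, ← h1]
  exact hfinal

end Sl2Rel

omit [IsAlgClosed 𝕜] [CharZero 𝕜] in
lemma map_subtype_ker_restrict (X : Module.End 𝕜 V) {p : Submodule 𝕜 V}
    (hX : ∀ x ∈ p, X x ∈ p) :
    (LinearMap.ker (X.restrict hX)).map p.subtype = LinearMap.ker X ⊓ p := by
  rw [← Module.End.eigenspace_zero (LinearMap.restrict X hX), map_subtype_eigenspace_restrict,
    Module.End.eigenspace_zero]

omit [IsAlgClosed 𝕜] [CharZero 𝕜] in
lemma comm_invariant_eigenspace {X Y : Module.End 𝕜 V} (h : Commute X Y) (μ : 𝕜) :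
    ∀ x ∈ X.eigenspace μ, Y x ∈ X.eigenspace μ := by
  intro x hx
  rw [Module.End.mem_eigenspace_iff] at hx ⊢
  have hcomm := LinearMap.congr_fun h.eq x
  simp only [Module.End.mul_apply] at hcomm
  rw [hcomm, hx, map_smul]

omit [IsAlgClosed 𝕜] [CharZero 𝕜] in
lemma comm_invariant_ker {X Y : Module.End 𝕜 V} (h : Commute X Y) :
    ∀ x ∈ LinearMap.ker X, Y x ∈ LinearMap.ker X := by
  rw [← Module.End.eigenspace_zero X]
  exact comm_invariant_eigenspace h 0

namespace Sl2Rel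

variable {E H F : Module.End 𝕜 V} (r : Sl2Rel E H F)
include r

lemma finrank_ker_inf {p : Submodule 𝕜 V}
    (hE : ∀ x ∈ p, E x ∈ p) (hH : ∀ x ∈ p, H x ∈ p) (hF : ∀ x ∈ p, F x ∈ p) :
    finrank 𝕜 (LinearMap.ker E ⊓ p : Submodule 𝕜 V) =
      finrank 𝕜 (H.eigenspace 0 ⊓ p : Submodule 𝕜 V)
        + finrank 𝕜 (H.eigenspace 1 ⊓ p : Submodule 𝕜 V) := by
  have r' := r.restrict hE hH hF
  have h := r'.finrank_ker_eq
  rw [← map_subtype_ker_restrict E hE, ← map_subtype_eigenspace_restrict H hH 0,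
    ← map_subtype_eigenspace_restrict H hH 1, Submodule.finrank_map_subtype_eq,
    Submodule.finrank_map_subtype_eq, Submodule.finrank_map_subtype_eq]
  exact h

lemma eq_bot_of_finrank_ker_inf_eq_zero {p : Submodule 𝕜 V}
    (hE : ∀ x ∈ p, E x ∈ p) (hH : ∀ x ∈ p, H x ∈ p) (hF : ∀ x ∈ p, F x ∈ p)
    (h0 : finrank 𝕜 (LinearMap.ker E ⊓ p : Submodule 𝕜 V) = 0) : p = ⊥ := by
  have r' := r.restrict hE hH hF
  obtain ⟨k, hk⟩ := r'.isNilpotent_E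
  have hker : LinearMap.ker (E.restrict hE) = ⊥ := by
    rw [← Submodule.finrank_eq_zero (S := LinearMap.ker (E.restrict hE))]
    rw [← Submodule.finrank_map_subtype_eq p, map_subtype_ker_restrict E hE]
    exact h0
  have hinj : Function.Injective (E.restrict hE) := LinearMap.ker_eq_bot.mp hker
  have hinjk : Function.Injective ((E.restrict hE) ^ k) := by
    intro a b hab
    rw [Module.End.pow_apply, Module.End.pow_apply] at hab
    exact hinj.iterate k hab
  rw [Submodule.eq_bot_iff]
  intro x hx
  have hzero : ((E.restrict hE) ^ k) ⟨x, hx⟩ = ((E.restrict hE) ^ k) 0 := by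
    rw [hk, map_zero, LinearMap.zero_apply]
  have := hinjk hzero
  simpa using congrArg Subtype.val this

end Sl2Rel

section Pair

variable {E₁ H₁ F₁ E₂ H₂ F₂ : Module.End 𝕜 V}

theorem pair_count (r₁ : Sl2Rel E₁ H₁ F₁) (r₂ : Sl2Rel E₂ H₂ F₂)
    (cEE : Commute E₁ E₂) (cEH : Commute E₁ H₂) (cEF : Commute E₁ F₂)
    (cHE : Commute H₁ E₂) (cHH : Commute H₁ H₂) (cHF : Commute H₁ F₂)
    (cFE : Commute F₁ E₂) (cFH : Commute F₁ H₂) (cFF : Commute F₁ F₂) :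
    finrank 𝕜 (LinearMap.ker E₁ ⊓ LinearMap.ker E₂ : Submodule 𝕜 V) =
      finrank 𝕜 (H₁.eigenspace 0 ⊓ H₂.eigenspace 0 : Submodule 𝕜 V)
        + finrank 𝕜 (H₁.eigenspace 0 ⊓ H₂.eigenspace 1 : Submodule 𝕜 V)
        + finrank 𝕜 (H₁.eigenspace 1 ⊓ H₂.eigenspace 0 : Submodule 𝕜 V)
        + finrank 𝕜 (H₁.eigenspace 1 ⊓ H₂.eigenspace 1 : Submodule 𝕜 V) := by
  have hA := r₂.finrank_ker_inf (p := LinearMap.ker E₁)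
    (comm_invariant_ker cEE) (comm_invariant_ker cEH) (comm_invariant_ker cEF)
  have hB0 := r₁.finrank_ker_inf (p := H₂.eigenspace 0)
    (comm_invariant_eigenspace cEH.symm 0) (comm_invariant_eigenspace cHH.symm 0)
    (comm_invariant_eigenspace cFH.symm 0)
  have hB1 := r₁.finrank_ker_inf (p := H₂.eigenspace 1)
    (comm_invariant_eigenspace cEH.symm 1) (comm_invariant_eigenspace cHH.symm 1)
    (comm_invariant_eigenspace cFH.symm 1)
  have e0 : (LinearMap.ker E₁ ⊓ LinearMap.ker E₂ : Submodule 𝕜 V)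
      = LinearMap.ker E₂ ⊓ LinearMap.ker E₁ := inf_comm _ _
  have e1 : (H₂.eigenspace 0 ⊓ LinearMap.ker E₁ : Submodule 𝕜 V)
      = LinearMap.ker E₁ ⊓ H₂.eigenspace 0 := inf_comm _ _
  have e2 : (H₂.eigenspace 1 ⊓ LinearMap.ker E₁ : Submodule 𝕜 V)
      = LinearMap.ker E₁ ⊓ H₂.eigenspace 1 := inf_comm _ _
  rw [e0, hA, e1, e2, hB0, hB1]
  omega

theorem pair_even_iff (r₁ : Sl2Rel E₁ H₁ F₁) (r₂ : Sl2Rel E₂ H₂ F₂)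
    (cEE : Commute E₁ E₂) (cEH : Commute E₁ H₂) (cEF : Commute E₁ F₂)
    (cHE : Commute H₁ E₂) (cHH : Commute H₁ H₂) (cHF : Commute H₁ F₂)
    (cFE : Commute F₁ E₂) (cFH : Commute F₁ H₂) (cFF : Commute F₁ F₂) :
    finrank 𝕜 (LinearMap.ker E₁ ⊓ LinearMap.ker E₂ : Submodule 𝕜 V)
      = finrank 𝕜 (H₁.eigenspace 0 ⊓ H₂.eigenspace 0 : Submodule 𝕜 V)
    ↔ (H₁.eigenspace 1 = ⊥ ∧ H₂.eigenspace 1 = ⊥) := by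
  have master := pair_count r₁ r₂ cEE cEH cEF cHE cHH cHF cFE cFH cFF
  constructor
  · intro heq
    have hz01 : finrank 𝕜 (H₁.eigenspace 0 ⊓ H₂.eigenspace 1 : Submodule 𝕜 V) = 0 := by omega
    have hz10 : finrank 𝕜 (H₁.eigenspace 1 ⊓ H₂.eigenspace 0 : Submodule 𝕜 V) = 0 := by omega
    have hz11 : finrank 𝕜 (H₁.eigenspace 1 ⊓ H₂.eigenspace 1 : Submodule 𝕜 V) = 0 := by omega
    constructor
    · apply r₂.eq_bot_of_finrank_ker_inf_eq_zero (p := H₁.eigenspace 1)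
        (comm_invariant_eigenspace cHE 1) (comm_invariant_eigenspace cHH 1)
        (comm_invariant_eigenspace cHF 1)
      have h := r₂.finrank_ker_inf (p := H₁.eigenspace 1)
        (comm_invariant_eigenspace cHE 1) (comm_invariant_eigenspace cHH 1)
        (comm_invariant_eigenspace cHF 1)
      rw [h, show (H₂.eigenspace 0 ⊓ H₁.eigenspace 1 : Submodule 𝕜 V)
          = H₁.eigenspace 1 ⊓ H₂.eigenspace 0 from inf_comm _ _,
        show (H₂.eigenspace 1 ⊓ H₁.eigenspace 1 : Submodule 𝕜 V)
          = H₁.eigenspace 1 ⊓ H₂.eigenspace 1 from inf_comm _ _]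
      omega
    · apply r₁.eq_bot_of_finrank_ker_inf_eq_zero (p := H₂.eigenspace 1)
        (comm_invariant_eigenspace cEH.symm 1) (comm_invariant_eigenspace cHH.symm 1)
        (comm_invariant_eigenspace cFH.symm 1)
      have h := r₁.finrank_ker_inf (p := H₂.eigenspace 1)
        (comm_invariant_eigenspace cEH.symm 1) (comm_invariant_eigenspace cHH.symm 1)
        (comm_invariant_eigenspace cFH.symm 1)
      rw [h]
      omega
  · rintro ⟨h1, h2⟩
    rw [master, h1, h2,
      show (H₁.eigenspace 0 ⊓ (⊥ : Submodule 𝕜 V)) = ⊥ from inf_bot_eq _,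
      show ((⊥ : Submodule 𝕜 V) ⊓ H₂.eigenspace 0) = ⊥ from bot_inf_eq _,
      show ((⊥ : Submodule 𝕜 V) ⊓ (⊥ : Submodule 𝕜 V)) = ⊥ from inf_bot_eq _,
      finrank_bot 𝕜 V]
    omega

end Pair

end Sl2Aux


end Sl2AuxSection

section Sl2Defs

variable (𝕜 : Type*) [Field 𝕜] [IsAlgClosed 𝕜] [CharZero 𝕜]
variable (L : Type*) [LieRing L] [LieAlgebra 𝕜 L]

/-- Commuting `sl₂`-triples `{e₁, 2h₁, f₁}` and `{e₂, 2h₂, f₂}` (note `[hᵢ,eᵢ] = eᵢ`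
is part of the characteristic, so only the remaining relations are recorded). -/
def CommutingSl2Triples (e₁ e₂ h₁ h₂ f₁ f₂ : L) : Prop :=
  ⁅h₁, f₁⁆ = -f₁ ∧ ⁅e₁, f₁⁆ = (2 : 𝕜) • h₁ ∧
  ⁅h₂, f₂⁆ = -f₂ ∧ ⁅e₂, f₂⁆ = (2 : 𝕜) • h₂ ∧
  ⁅e₁, f₂⁆ = 0 ∧ ⁅f₁, e₂⁆ = 0 ∧ ⁅f₁, f₂⁆ = 0 ∧ ⁅h₁, f₂⁆ = 0 ∧ ⁅h₂, f₁⁆ = 0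

end Sl2Defs

section Statement14

variable (𝕜 : Type*) [Field 𝕜] [IsAlgClosed 𝕜] [CharZero 𝕜]
variable (L : Type*) [LieRing L] [LieAlgebra 𝕜 L] [Module.Finite 𝕜 L]
  [LieAlgebra.IsSemisimple 𝕜 L]

/-- A nilpotent element `e` belonging to an `sl₂`-triple with semisimple member `h̃` is
even if all eigenvalues of `ad h̃` on `𝔤` are even integers. -/
def IsEvenNilpotentFor (htilde : L) : Prop :=
  ∀ μ : 𝕜, (ad 𝕜 L htilde).HasEigenvalue μ → ∃ m : ℤ, μ = ((2 * m : ℤ) : 𝕜)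

/-- Proposition 3.1. A rectangular nilpotent pair `(e₁,e₂)` (with
commuting `sl₂`-triples `{e₁,2h₁,f₁}`, `{e₂,2h₂,f₂}`, `(h₁,h₂)` a characteristic) is even
(`dim 𝔷_𝔤(𝐞) = dim 𝔷_𝔤(𝐡)`) iff both `e₁` and `e₂` are even nilpotent elements. -/
theorem statement14 (e₁ e₂ h₁ h₂ f₁ f₂ : L)
    (hnp : IsNilpotentPair 𝕜 L e₁ e₂) (hch : IsCharacteristic 𝕜 L e₁ e₂ h₁ h₂)
    (hrect : CommutingSl2Triples 𝕜 L e₁ e₂ h₁ h₂ f₁ f₂) :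
    Module.finrank 𝕜 (cent 𝕜 L {e₁, e₂}) = Module.finrank 𝕜 (cent 𝕜 L {h₁, h₂}) ↔
      (IsEvenNilpotentFor 𝕜 L ((2 : 𝕜) • h₁) ∧ IsEvenNilpotentFor 𝕜 L ((2 : 𝕜) • h₂)) := by
  classical
  obtain ⟨hee, -⟩ := hnp
  obtain ⟨hss1, hss2, hhh, h1e1, h2e2, h1e2, h2e1, -⟩ := hch
  obtain ⟨h1f1, e1f1, h2f2, e2f2, e1f2, f1e2, f1f2, h1f2, h2f1⟩ := hrect
  set E₁ : Module.End 𝕜 L := ad 𝕜 L e₁ with hE₁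
  set F₁ : Module.End 𝕜 L := ad 𝕜 L f₁ with hF₁
  set H₁ : Module.End 𝕜 L := ad 𝕜 L ((2:𝕜) • h₁) with hH₁
  set E₂ : Module.End 𝕜 L := ad 𝕜 L e₂ with hE₂
  set F₂ : Module.End 𝕜 L := ad 𝕜 L f₂ with hF₂
  set H₂ : Module.End 𝕜 L := ad 𝕜 L ((2:𝕜) • h₂) with hH₂
  have comm_of : ∀ x y : L, ⁅x, y⁆ = 0 → Commute (ad 𝕜 L x) (ad 𝕜 L y) := by
    intro x y h
    have hb : ⁅ad 𝕜 L x, ad 𝕜 L y⁆ = 0 := by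
      rw [← LieHom.map_lie, h, map_zero]
    rw [Ring.lie_def, sub_eq_zero] at hb
    exact hb
  have two_smul_eq : ∀ X : Module.End 𝕜 L, (2:𝕜) • X = 2 • X := by
    intro X
    rw [two_smul, two_nsmul]
  -- the two `Sl2Rel`s
  have r₁ : Sl2Aux.Sl2Rel E₁ H₁ F₁ := by
    refine ⟨?_, ?_, ?_, ?_⟩
    · rw [hH₁, hE₁, ← LieHom.map_lie, smul_lie, h1e1, map_smul, two_smul_eq]
    · rw [hH₁, hF₁, ← LieHom.map_lie, smul_lie, h1f1, map_smul, two_smul_eq,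
        map_neg, smul_neg]
    · rw [hE₁, hF₁, ← LieHom.map_lie, e1f1, hH₁]
    · rw [hH₁, map_smul]
      exact Module.End.IsSemisimple_smul 2 hss1
  have r₂ : Sl2Aux.Sl2Rel E₂ H₂ F₂ := by
    refine ⟨?_, ?_, ?_, ?_⟩
    · rw [hH₂, hE₂, ← LieHom.map_lie, smul_lie, h2e2, map_smul, two_smul_eq]
    · rw [hH₂, hF₂, ← LieHom.map_lie, smul_lie, h2f2, map_smul, two_smul_eq,
        map_neg, smul_neg]
    · rw [hE₂, hF₂, ← LieHom.map_lie, e2f2, hH₂]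
    · rw [hH₂, map_smul]
      exact Module.End.IsSemisimple_smul 2 hss2
  -- the nine commutation relations
  have cEE : Commute E₁ E₂ := comm_of _ _ hee
  have cEH : Commute E₁ H₂ := comm_of _ _ (by
    rw [lie_smul, ← lie_skew, h2e1, neg_zero, smul_zero])
  have cEF : Commute E₁ F₂ := comm_of _ _ e1f2
  have cHE : Commute H₁ E₂ := comm_of _ _ (by rw [smul_lie, h1e2, smul_zero])
  have cHH : Commute H₁ H₂ := comm_of _ _ (by rw [smul_lie, lie_smul, hhh, smul_zero, smul_zero])
  have cHF : Commute H₁ F₂ := comm_of _ _ (by rw [smul_lie, h1f2, smul_zero])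
  have cFE : Commute F₁ E₂ := comm_of _ _ f1e2
  have cFH : Commute F₁ H₂ := comm_of _ _ (by
    rw [lie_smul, ← lie_skew, h2f1, neg_zero, smul_zero])
  have cFF : Commute F₁ F₂ := comm_of _ _ f1f2
  -- identification of the centralizers
  have hcent_e : cent 𝕜 L {e₁, e₂} = LinearMap.ker E₁ ⊓ LinearMap.ker E₂ := by
    ext x
    constructor
    · intro h
      have h1 : ⁅e₁, x⁆ = 0 := h e₁ (by simp)
      have h2 : ⁅e₂, x⁆ = 0 := h e₂ (by simp)
      refine ⟨LinearMap.mem_ker.mpr ?_, LinearMap.mem_ker.mpr ?_⟩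
      · rw [hE₁, ad_apply]; exact h1
      · rw [hE₂, ad_apply]; exact h2
    · rintro ⟨ha, hb⟩ s hs
      have ha' : ⁅e₁, x⁆ = 0 := by rw [← ad_apply (R := 𝕜), ← hE₁]; exact LinearMap.mem_ker.mp ha
      have hb' : ⁅e₂, x⁆ = 0 := by rw [← ad_apply (R := 𝕜), ← hE₂]; exact LinearMap.mem_ker.mp hb
      rcases hs with rfl | hs
      · exact ha'
      · rcases hs with rfl
        exact hb'
  have key : ∀ (h x : L), ad 𝕜 L ((2:𝕜) • h) x = 0 ↔ ⁅h, x⁆ = 0 := by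
    intro h x
    rw [ad_apply, smul_lie]
    constructor
    · intro hz
      exact (smul_eq_zero.mp hz).resolve_left two_ne_zero
    · intro hz
      rw [hz, smul_zero]
  have hcent_h : cent 𝕜 L {h₁, h₂} = Module.End.eigenspace H₁ 0 ⊓ Module.End.eigenspace H₂ 0 := by
    rw [Module.End.eigenspace_zero, Module.End.eigenspace_zero]
    ext x
    constructor
    · intro h
      have ha : ⁅h₁, x⁆ = 0 := h h₁ (by simp)
      have hb : ⁅h₂, x⁆ = 0 := h h₂ (by simp)
      refine ⟨LinearMap.mem_ker.mpr ?_, LinearMap.mem_ker.mpr ?_⟩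
      · rw [hH₁]; exact (key h₁ x).mpr ha
      · rw [hH₂]; exact (key h₂ x).mpr hb
    · rintro ⟨ha, hb⟩ s hs
      have ha' : ⁅h₁, x⁆ = 0 := (key h₁ x).mp (by rw [← hH₁]; exact LinearMap.mem_ker.mp ha)
      have hb' : ⁅h₂, x⁆ = 0 := (key h₂ x).mp (by rw [← hH₂]; exact LinearMap.mem_ker.mp hb)
      rcases hs with rfl | hs
      · exact ha'
      · rcases hs with rfl
        exact hb'
  rw [hcent_e, hcent_h]
  rw [Sl2Aux.pair_even_iff r₁ r₂ cEE cEH cEF cHE cHH cHF cFE cFH cFF]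
  constructor
  · rintro ⟨ha, hb⟩
    exact ⟨fun μ hμ => Sl2Aux.Sl2Rel.even_of_eigen_one_bot (r := r₁) ha hμ,
      fun μ hμ => Sl2Aux.Sl2Rel.even_of_eigen_one_bot (r := r₂) hb hμ⟩
  · rintro ⟨ha, hb⟩
    exact ⟨Sl2Aux.Sl2Rel.eigen_one_bot_of_even (r := r₁) ha,
      Sl2Aux.Sl2Rel.eigen_one_bot_of_even (r := r₂) hb⟩

end Statement14
end
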